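/- For every n ≥ 1 and every map ρ from the variables x_1,…,x_{2n} to the rook monoid R_3, the value ρ(v_{n,6}^{(1)}) is never a 3×3 permutation matrix of determinant −1; that is, ρ(v_{n,6}^{(1)}) belongs to the set R'_3 obtained from R_3 by removing the three transposition matrices. -/

import Mathlib

universe u v

/-- Evaluation of a (nonempty) word, given as a list of variables, in a magma with an
explicit binary operation; the empty word evaluates to `none`. -/
def wEval {ι S : Type*} (mul : S → S → S) (ρ : ι → S) : List ι → Option S
  | [] => none
  | a :: l => some (l.foldl (fun s i => mul s (ρ i)) (ρ a))

/-- The word `u_{n,k,m} = x₁⋯x_{n+k}(xₙ⋯x₁·x_{n+1}⋯x_{n+k})^{2m-1}` (variables 0-indexed). -/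
def uWord (n k m : ℕ) : List ℕ :=
  List.range (n + k) ++
    (List.replicate (2 * m - 1) ((List.range n).reverse ++ List.range' n k)).flatten

/-- The rook monoid `R_t`: zero-one `t × t` matrices with at most one entry equal to `1`
in each row and in each column. -/
def RookSet (t : ℕ) : Set (Matrix (Fin t) (Fin t) ℕ) :=
  {A | (∀ i j, A i j = 0 ∨ A i j = 1) ∧
    (∀ i j k, A i j = 1 → A i k = 1 → j = k) ∧
    (∀ i j k, A i k = 1 → A j k = 1 → i = j)}

/-- The three `3 × 3` transposition matrices. -/
def transpositions : Set (Matrix (Fin 3) (Fin 3) ℕ) :=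
  {Matrix.of ![![0, 1, 0], ![1, 0, 0], ![0, 0, 1]],
   Matrix.of ![![0, 0, 1], ![0, 1, 0], ![1, 0, 0]],
   Matrix.of ![![1, 0, 0], ![0, 0, 1], ![0, 1, 0]]}

private lemma rook_entry_mul (A B : Matrix (Fin 3) (Fin 3) ℕ) (i j : Fin 3) :
    (A * B) i j = A i 0 * B 0 j + A i 1 * B 1 j + A i 2 * B 2 j := by
  simp [Matrix.mul_apply, Fin.sum_univ_three]

private lemma rook_mul_mem {A B : Matrix (Fin 3) (Fin 3) ℕ}
    (hA : A ∈ RookSet 3) (hB : B ∈ RookSet 3) : A * B ∈ RookSet 3 := by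
  obtain ⟨hA01, hArow, hAcol⟩ := hA
  obtain ⟨hB01, hBrow, hBcol⟩ := hB
  refine ⟨fun i j => ?_, fun i j k hj hk => ?_, fun i j k hi hj => ?_⟩
  · rw [rook_entry_mul]
    rcases hA01 i 0 with h0|h0 <;> rcases hA01 i 1 with h1|h1 <;> rcases hA01 i 2 with h2|h2 <;>
      rcases hB01 0 j with g0|g0 <;> rcases hB01 1 j with g1|g1 <;> rcases hB01 2 j with g2|g2 <;>
      first
        | exact absurd (hArow i 0 1 h0 h1) (by decide)
        | exact absurd (hArow i 0 2 h0 h2) (by decide)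
        | exact absurd (hArow i 1 2 h1 h2) (by decide)
        | (rw [h0, h1, h2, g0, g1, g2]; norm_num)
  · rw [rook_entry_mul] at hj hk
    rcases hA01 i 0 with h0|h0 <;> rcases hA01 i 1 with h1|h1 <;> rcases hA01 i 2 with h2|h2 <;>
      rw [h0, h1, h2] at hj hk <;>
      simp only [one_mul, zero_mul, zero_add, add_zero] at hj hk <;>
      first
        | exact absurd (hArow i 0 1 h0 h1) (by decide)
        | exact absurd (hArow i 0 2 h0 h2) (by decide)
        | exact absurd (hArow i 1 2 h1 h2) (by decide)
        | exact hBrow 0 j k hj hk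
        | exact hBrow 1 j k hj hk
        | exact hBrow 2 j k hj hk
        | exact absurd hj (by decide)
  · rw [rook_entry_mul] at hi hj
    rcases hB01 0 k with h0|h0 <;> rcases hB01 1 k with h1|h1 <;> rcases hB01 2 k with h2|h2 <;>
      rw [h0, h1, h2] at hi hj <;>
      simp only [mul_one, mul_zero, zero_add, add_zero] at hi hj <;>
      first
        | exact absurd (hBcol 0 1 k h0 h1) (by decide)
        | exact absurd (hBcol 0 2 k h0 h2) (by decide)
        | exact absurd (hBcol 1 2 k h1 h2) (by decide)
        | exact hAcol i j 0 hi hj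
        | exact hAcol i j 1 hi hj
        | exact hAcol i j 2 hi hj
        | exact absurd hi (by decide)

private lemma one_mem_rook : (1 : Matrix (Fin 3) (Fin 3) ℕ) ∈ RookSet 3 := by
  refine ⟨fun i j => ?_, fun i j k hj hk => ?_, fun i j k hi hj => ?_⟩ <;>
    fin_cases i <;> fin_cases j <;>
    simp_all [Matrix.one_apply]

private lemma prod_mem_rook : ∀ l : List (Matrix (Fin 3) (Fin 3) ℕ),
    (∀ A ∈ l, A ∈ RookSet 3) → l.prod ∈ RookSet 3
  | [], _ => by simpa using one_mem_rook
  | A :: l, h => by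
    rw [List.prod_cons]
    exact rook_mul_mem (h A (by simp)) (prod_mem_rook l fun B hB => h B (by simp [hB]))

private lemma foldl_mul_eq {ι M : Type*} [Monoid M] (ρ : ι → M) :
    ∀ (l : List ι) (s : M), l.foldl (fun s i => s * ρ i) s = s * (l.map ρ).prod
  | [], s => by simp
  | a :: l, s => by
    simp only [List.foldl_cons, List.map_cons, List.prod_cons, foldl_mul_eq ρ l, mul_assoc]

private lemma wEval_eq_prod {ι M : Type*} [Monoid M] (ρ : ι → M) :
    ∀ l : List ι, l ≠ [] → wEval (· * ·) ρ l = some ((l.map ρ).prod)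
  | [], h => absurd rfl h
  | a :: l, _ => by
    simp only [wEval, List.map_cons, List.prod_cons, Option.some.injEq]
    exact foldl_mul_eq ρ l (ρ a)

/-- For every `n ≥ 1` and every assignment of rook matrices to the variables,
the value of `v_{n,6}^{(1)} (= u_{n,n,6})` is never a transposition matrix; that is, it lies in
`R₃' = R₃ \ {transpositions}`. -/
theorem v1_value_avoids_transpositions :
    ∀ n, 1 ≤ n → ∀ ρ : ℕ → Matrix (Fin 3) (Fin 3) ℕ, (∀ i, ρ i ∈ RookSet 3) →
      ∀ A, wEval (· * ·) ρ (uWord n n 6) = some A → A ∈ RookSet 3 \ transpositions := by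
  intro n hn ρ hρ A hA
  have hne : uWord n n 6 ≠ [] := by
    intro h
    have := congrArg List.length h
    simp [uWord] at this
    omega
  have hval : A = ((uWord n n 6).map ρ).prod := by
    have h := wEval_eq_prod ρ (uWord n n 6) hne
    rw [hA] at h
    exact Option.some.inj h
  constructor
  · rw [hval]
    refine prod_mem_rook _ ?_
    intro B hB
    rw [List.mem_map] at hB
    obtain ⟨i, _, rfl⟩ := hB
    exact hρ i
  · -- determinant argument
    set d : ℕ → ℤ := fun i => ((ρ i).map (Nat.cast : ℕ → ℤ)).det with hd
    set L := uWord n n 6 with hL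
    -- det of the value equals the product of dets of the letters
    have hdet : ((A.map (Nat.cast : ℕ → ℤ))).det = (L.map d).prod := by
      rw [hval]
      have h1 : ((L.map ρ).prod).map (Nat.cast : ℕ → ℤ)
          = ((L.map ρ).map (fun M : Matrix (Fin 3) (Fin 3) ℕ => M.map (Nat.cast : ℕ → ℤ))).prod := by
        have := map_list_prod ((Nat.castRingHom ℤ).mapMatrix
          (m := Fin 3)) (L.map ρ)
        simpa [RingHom.mapMatrix_apply, Function.comp_def] using this
      rw [h1]
      have h2 := map_list_prod (Matrix.detMonoidHom
        (n := Fin 3) (R := ℤ))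
        ((L.map ρ).map (fun M : Matrix (Fin 3) (Fin 3) ℕ => M.map (Nat.cast : ℕ → ℤ)))
      simpa [Matrix.coe_detMonoidHom, List.map_map, Function.comp_def, hd] using h2
    -- the product of dets is a 12th power
    set D : ℤ := (((List.range (n + n)).map d)).prod with hD
    have hw : (((List.range n).reverse ++ List.range' n n).map d).prod = D := by
      have hperm : List.Perm ((List.range n).reverse ++ List.range' n n) (List.range (n + n)) := by
        have h2 : List.range n ++ List.range' n n = List.range (n + n) := by
          rw [List.range_eq_range' (n := n + n)]
          have := List.range'_append_1 (s := 0) (m := n) (n := n)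
          simpa [List.range_eq_range'] using this
        rw [← h2]
        exact (List.reverse_perm _).append_right _
      exact (hperm.map d).prod_eq
    have h12 : (L.map d).prod = D ^ 12 := by
      rw [hL, uWord]
      rw [List.map_append, List.prod_append, List.map_flatten, List.map_replicate,
        List.prod_flatten, List.map_replicate, List.prod_replicate, hw, ← hD]
      ring_nf
    intro ht
    have hnonneg : 0 ≤ (A.map (Nat.cast : ℕ → ℤ)).det := by
      rw [hdet, h12, show (12 : ℕ) = 2 * 6 by norm_num, pow_mul]
      positivity
    have hneg : (A.map (Nat.cast : ℕ → ℤ)).det = -1 := by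
      rcases ht with h | h | h <;>
        · rw [h]
          simp [Matrix.det_fin_three, Matrix.map_apply]
    omega
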